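/- For every n and all x,y ∈ V_{SG_n} (so that also x,y ∈ V_{SG_{n+1}}), the graph distances satisfy d_{SG_{n+1}}(x,y) = 2·d_{SG_n}(x,y). -/

import Mathlib

open scoped Classical BigOperators ENNReal

noncomputable section

/-- Points of the plane. -/
abbrev Pt : Type := ℝ × ℝ

/-- Bottom-left corner `A`. -/
def u1 : Pt := (0, 0)
/-- Top corner `C`. -/
def u2 : Pt := (1/2, Real.sqrt 3 / 2)
/-- Bottom-right corner `B`. -/
def u3 : Pt := (1, 0)

/-- The three corners of the gasket. -/
def corners : Set Pt := {u1, u2, u3}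

/-- Vertex set of the `n`-th Sierpinski gasket approximation graph `SG_n`. -/
def V : ℕ → Set Pt
  | 0 => {u1, u2, u3}
  | n + 1 =>
      (fun p : Pt => (2:ℝ)⁻¹ • p) ''
        (V n ∪ (fun p => u2 + p) '' V n ∪ (fun p => u3 + p) '' V n)

/-- Edge set (as ordered pairs) of `SG_n`. -/
def Ed : ℕ → Set (Pt × Pt)
  | 0 => {(u1, u2), (u2, u3), (u1, u3)}
  | n + 1 =>
      (fun q : Pt × Pt => ((2:ℝ)⁻¹ • q.1, (2:ℝ)⁻¹ • q.2)) ''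
        (Ed n ∪ (fun q : Pt × Pt => (u2 + q.1, u2 + q.2)) '' Ed n ∪
          (fun q : Pt × Pt => (u3 + q.1, u3 + q.2)) '' Ed n)

/-- The `n`-th Sierpinski gasket approximation graph, as a simple graph on the plane
(vertices outside `V n` are isolated). -/
def SG (n : ℕ) : SimpleGraph Pt where
  Adj x y := ((x, y) ∈ Ed n ∨ (y, x) ∈ Ed n) ∧ x ≠ y
  symm := ⟨fun x y h => ⟨h.1.symm, h.2.symm⟩⟩
  loopless := ⟨fun _ h => h.2 rfl⟩

/-- Graph distance on `SG_n`. -/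
def gdist (n : ℕ) (x y : Pt) : ℕ := (SG n).dist x y

/-- `d_n x`: graph distance from `x` to the nearest corner of `SG_n`. -/
def dcorner (n : ℕ) (x : Pt) : ℕ :=
  min (gdist n x u1) (min (gdist n x u2) (gdist n x u3))

/-- Graph Laplacian of `SG_n` at a (non-corner, degree 4) vertex `x`:
`Δ_n f x = 4 f x - ∑_{y ∼ x} f y`. -/
def lap (n : ℕ) (f : Pt → ℝ) (x : Pt) : ℝ :=
  4 * f x - ∑ᶠ (y : Pt) (_ : (SG n).Adj x y), f y

/-- `g : Pt → Pt → ℝ` is the Green function of `SG_n` (stopped at the corners):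
it vanishes whenever one argument is a corner, and for every non-corner vertex `y`
the function `x ↦ g x y` has Laplacian `δ_y` at every non-corner vertex `x`. -/
def IsGreen (n : ℕ) (g : Pt → Pt → ℝ) : Prop :=
  (∀ x y : Pt, x ∈ corners ∨ y ∈ corners → g x y = 0) ∧
    ∀ y ∈ V n, y ∉ corners → ∀ x ∈ V n, x ∉ corners →
      lap n (fun z => g z y) x = if x = y then 1 else 0

/-- `h_n x = ∑_{y ∈ V_{SG_n}} g_n(x,y)`. -/
def hfun (n : ℕ) (g : Pt → Pt → ℝ) (x : Pt) : ℝ := ∑ᶠ y ∈ V n, g x y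

/-- Green convolution `(g_n * σ)(x) = ∑_{y ∈ V_{SG_n}} g_n(x,y) σ(y)`. -/
def conv (n : ℕ) (g : Pt → Pt → ℝ) (σ : Pt → ℕ) (x : Pt) : ℝ :=
  ∑ᶠ y ∈ V n, g x y * (σ y : ℝ)

/-- Midpoint of side `AB`. -/
def mAB : Pt := (2:ℝ)⁻¹ • (u1 + u3)
/-- Midpoint of side `BC`. -/
def mBC : Pt := (2:ℝ)⁻¹ • (u3 + u2)
/-- Midpoint of side `CA`. -/
def mCA : Pt := (2:ℝ)⁻¹ • (u2 + u1)

/-- The recursively defined sandpile configurations `M_n(a,b,c)` on `SG_n`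
(value `0` off the vertex set, and junk at level `0`). -/
def M : ℕ → ℕ → ℕ → ℕ → Pt → ℕ
  | 0, _, _, _, _ => 0
  | 1, a, b, c, x =>
      if x = u1 then a else if x = u3 then b else if x = u2 then c
      else if x = mAB then 3 else if x = mBC then 2 else if x = mCA then 3 else 0
  | n + 2, a, b, c, x =>
      if x = u1 then a else if x = u3 then b else if x = u2 then c
      else if x = mAB then 3 else if x = mBC then 2 else if x = mCA then 3
      else if (2:ℝ) • x ∈ V (n+1) then M (n+1) a 3 3 ((2:ℝ) • x)
      else if (2:ℝ) • x - u3 ∈ V (n+1) then M (n+1) 3 b 2 ((2:ℝ) • x - u3)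
      else if (2:ℝ) • x - u2 ∈ V (n+1) then M (n+1) 3 2 c ((2:ℝ) • x - u2)
      else 0

/-- Centroid of the three corners. -/
def ctr : Pt := (3:ℝ)⁻¹ • (u1 + u2 + u3)

/-- Rotation of the plane by 120° counterclockwise about the centroid. -/
def rotccw (x : Pt) : Pt :=
  (ctr.1 - (x.1 - ctr.1) / 2 - Real.sqrt 3 / 2 * (x.2 - ctr.2),
   ctr.2 + Real.sqrt 3 / 2 * (x.1 - ctr.1) - (x.2 - ctr.2) / 2)

/-- Rotation of the plane by 120° clockwise about the centroid. -/
def rotcw (x : Pt) : Pt :=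
  (ctr.1 - (x.1 - ctr.1) / 2 + Real.sqrt 3 / 2 * (x.2 - ctr.2),
   ctr.2 - Real.sqrt 3 / 2 * (x.1 - ctr.1) - (x.2 - ctr.2) / 2)

/-- The sandpile identity `id_n` on `SG_n` for `n ≥ 2` (junk `0` for `n ≤ 1` and off the
vertex set): value `2` at the corners and side midpoints, the configuration `M_{n-1}(2,2,2)`
rescaled on the bottom-left copy, its clockwise 120° rotation on the top copy, and its
counterclockwise 120° rotation on the bottom-right copy. -/
def sandId : ℕ → Pt → ℕ
  | 0, _ => 0
  | 1, _ => 0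
  | m + 2, x =>
      if x = u1 ∨ x = u2 ∨ x = u3 ∨ x = mAB ∨ x = mBC ∨ x = mCA then 2
      else if (2:ℝ) • x ∈ V (m+1) then M (m+1) 2 2 2 ((2:ℝ) • x)
      else if (2:ℝ) • x - u2 ∈ V (m+1) then M (m+1) 2 2 2 (rotccw ((2:ℝ) • x - u2))
      else if (2:ℝ) • x - u3 ∈ V (m+1) then M (m+1) 2 2 2 (rotcw ((2:ℝ) • x - u3))
      else 0

/-- `V_* = ⋃_n V_{SG_n}`. -/
def Vstar : Set Pt := ⋃ n, V n

/-- The Sierpinski gasket: the closure of `V_*` in the plane. -/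
def SGset : Set Pt := closure Vstar

/-- Euclidean distance on the plane. -/
def eud (x y : Pt) : ℝ := Real.sqrt ((x.1 - y.1) ^ 2 + (x.2 - y.2) ^ 2)

/-- The point of `V n` nearest to `x` in Euclidean distance, ties resolved by taking the
rightmost (largest first coordinate) minimizer. -/
def nearest (n : ℕ) (x : Pt) : Pt :=
  if h : ∃ y ∈ V n, (∀ z ∈ V n, eud x y ≤ eud x z) ∧
      ∀ z ∈ V n, eud x z = eud x y → z.1 ≤ y.1
  then h.choose else x

/-- Piecewise constant continuation `f^▲` of a function on `V n` to the gasket. -/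
def ext (n : ℕ) (f : Pt → ℝ) (x : Pt) : ℝ := f (nearest n x)

/-- Arc length (total variation w.r.t. the Euclidean distance) of a curve
`γ : [0,1] → ℝ²`. -/
def pathLen (γ : ℝ → Pt) : ℝ≥0∞ :=
  ⨆ p : ℕ × {u : ℕ → ℝ // Monotone u ∧ ∀ i, u i ∈ Set.Icc (0:ℝ) 1},
    ∑ i ∈ Finset.range p.1, ENNReal.ofReal (eud (γ (p.2.1 (i + 1))) (γ (p.2.1 i)))

/-- Intrinsic (shortest-path) distance between `x` and `y` through the gasket. -/
def intrinsicD (x y : Pt) : ℝ≥0∞ :=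
  ⨅ (γ : ℝ → Pt) (_ : ContinuousOn γ (Set.Icc 0 1)) (_ : γ 0 = x) (_ : γ 1 = y)
    (_ : Set.MapsTo γ (Set.Icc 0 1) SGset), pathLen γ

/-- `d(x)`: intrinsic shortest-path distance in the gasket from `x` to the nearest corner. -/
def dSG (x : Pt) : ℝ :=
  (min (intrinsicD x u1) (min (intrinsicD x u2) (intrinsicD x u3))).toReal

/-! ### midpoints, cells, patterns -/

def mp (a b : Pt) : Pt := (2:ℝ)⁻¹ • (a + b)

def Cells : ℕ → Set (Pt × Pt × Pt)
  | 0 => {(u1, u2, u3)}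
  | n + 1 =>
      (fun T : Pt × Pt × Pt => ((2:ℝ)⁻¹ • T.1, (2:ℝ)⁻¹ • T.2.1, (2:ℝ)⁻¹ • T.2.2)) ''
        (Cells n ∪ (fun T : Pt × Pt × Pt => (u2 + T.1, u2 + T.2.1, u2 + T.2.2)) '' Cells n ∪
          (fun T : Pt × Pt × Pt => (u3 + T.1, u3 + T.2.1, u3 + T.2.2)) '' Cells n)

def pat (a b c : Pt) : Set (Pt × Pt) :=
  {(a, mp a b), (mp a b, mp a c), (a, mp a c), (mp a b, b), (b, mp b c), (mp a b, mp b c),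
    (mp a c, mp b c), (mp b c, c), (mp a c, c)}

def tri (a b c : Pt) : Set (Pt × Pt) := {(a, b), (b, c), (a, c)}

def cor (a b c : Pt) : Set Pt := {a, b, c}

def six (a b c : Pt) : Set Pt := {a, b, c, mp a b, mp a c, mp b c}

lemma mp_smul (a b : Pt) : mp ((2:ℝ)⁻¹ • a) ((2:ℝ)⁻¹ • b) = (2:ℝ)⁻¹ • mp a b := by
  simp only [mp]; module

lemma mp_add (u a b : Pt) : mp (u + a) (u + b) = u + mp a b := by
  simp only [mp]; module

/-- generic transport of cell-indexed unions through a point map -/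
lemma key {β : Type*} (P : Pt → Pt → Pt → Set β) (f : Pt → Pt) (fB : β → β)
    (hP : ∀ a b c, fB '' P a b c = P (f a) (f b) (f c)) (S : Set (Pt × Pt × Pt)) :
    fB '' (⋃ T ∈ S, P T.1 T.2.1 T.2.2) =
      ⋃ T ∈ (fun T : Pt × Pt × Pt => (f T.1, f T.2.1, f T.2.2)) '' S, P T.1 T.2.1 T.2.2 := by
  rw [Set.image_iUnion₂, Set.biUnion_image]
  exact Set.iUnion₂_congr fun T hT => hP _ _ _

lemma pat_smul (a b c : Pt) :
    (fun q : Pt × Pt => ((2:ℝ)⁻¹ • q.1, (2:ℝ)⁻¹ • q.2)) '' pat a b c =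
      pat ((2:ℝ)⁻¹ • a) ((2:ℝ)⁻¹ • b) ((2:ℝ)⁻¹ • c) := by
  simp [pat, Set.image_insert_eq, mp_smul]

lemma pat_add (u a b c : Pt) :
    (fun q : Pt × Pt => (u + q.1, u + q.2)) '' pat a b c = pat (u + a) (u + b) (u + c) := by
  simp [pat, Set.image_insert_eq, mp_add]

lemma tri_smul (a b c : Pt) :
    (fun q : Pt × Pt => ((2:ℝ)⁻¹ • q.1, (2:ℝ)⁻¹ • q.2)) '' tri a b c =
      tri ((2:ℝ)⁻¹ • a) ((2:ℝ)⁻¹ • b) ((2:ℝ)⁻¹ • c) := by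
  simp [tri, Set.image_insert_eq]

lemma tri_add (u a b c : Pt) :
    (fun q : Pt × Pt => (u + q.1, u + q.2)) '' tri a b c = tri (u + a) (u + b) (u + c) := by
  simp [tri, Set.image_insert_eq]

lemma cor_smul (a b c : Pt) :
    (fun p : Pt => (2:ℝ)⁻¹ • p) '' cor a b c = cor ((2:ℝ)⁻¹ • a) ((2:ℝ)⁻¹ • b) ((2:ℝ)⁻¹ • c) := by
  simp [cor, Set.image_insert_eq]

lemma cor_add (u a b c : Pt) :
    (fun p : Pt => u + p) '' cor a b c = cor (u + a) (u + b) (u + c) := by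
  simp [cor, Set.image_insert_eq]

lemma six_smul (a b c : Pt) :
    (fun p : Pt => (2:ℝ)⁻¹ • p) '' six a b c = six ((2:ℝ)⁻¹ • a) ((2:ℝ)⁻¹ • b) ((2:ℝ)⁻¹ • c) := by
  simp [six, Set.image_insert_eq, mp_smul]

lemma six_add (u a b c : Pt) :
    (fun p : Pt => u + p) '' six a b c = six (u + a) (u + b) (u + c) := by
  simp [six, Set.image_insert_eq, mp_add]

lemma V_eq_cor : ∀ n, V n = ⋃ T ∈ Cells n, cor T.1 T.2.1 T.2.2 := by
  intro n
  induction n with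
  | zero => simp [V, Cells, cor]
  | succ n ih =>
      show (fun p : Pt => (2:ℝ)⁻¹ • p) '' (V n ∪ _ ∪ _) = ⋃ T ∈ Cells (n+1), _
      rw [ih]
      rw [show ((fun p : Pt => u2 + p) '' ⋃ T ∈ Cells n, cor T.1 T.2.1 T.2.2) =
          ⋃ T ∈ (fun T : Pt × Pt × Pt => (u2 + T.1, u2 + T.2.1, u2 + T.2.2)) '' Cells n,
            cor T.1 T.2.1 T.2.2 from key _ _ _ (fun a b c => cor_add u2 a b c) _]
      rw [show ((fun p : Pt => u3 + p) '' ⋃ T ∈ Cells n, cor T.1 T.2.1 T.2.2) =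
          ⋃ T ∈ (fun T : Pt × Pt × Pt => (u3 + T.1, u3 + T.2.1, u3 + T.2.2)) '' Cells n,
            cor T.1 T.2.1 T.2.2 from key _ _ _ (fun a b c => cor_add u3 a b c) _]
      rw [← Set.biUnion_union, ← Set.biUnion_union]
      rw [show Cells (n+1) = (fun T : Pt × Pt × Pt =>
          ((2:ℝ)⁻¹ • T.1, (2:ℝ)⁻¹ • T.2.1, (2:ℝ)⁻¹ • T.2.2)) ''
          (Cells n ∪ _ '' Cells n ∪ _ '' Cells n) from rfl]
      exact key _ _ _ (fun a b c => cor_smul a b c) _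

lemma pat_eq_tris (a b c : Pt) :
    pat a b c = tri a (mp a b) (mp a c) ∪ tri (mp a b) b (mp b c) ∪
      tri (mp a c) (mp b c) c := by
  ext p; simp [pat, tri]; tauto

lemma six_eq_cors (a b c : Pt) :
    six a b c = cor a (mp a b) (mp a c) ∪ cor (mp a b) b (mp b c) ∪
      cor (mp a c) (mp b c) c := by
  ext p; simp [six, cor]; tauto

lemma u1_zero : u1 = (0 : Pt) := rfl

lemma half_u2 : (2:ℝ)⁻¹ • u2 = mp u1 u2 := by simp [mp, u1_zero]
lemma half_u3 : (2:ℝ)⁻¹ • u3 = mp u1 u3 := by simp [mp, u1_zero]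
lemma half_u1 : (2:ℝ)⁻¹ • u1 = u1 := by simp [u1_zero]
lemma half_u2u1 : (2:ℝ)⁻¹ • (u2 + u1) = mp u1 u2 := by simp [mp]; module
lemma half_u2u2 : (2:ℝ)⁻¹ • (u2 + u2) = u2 := by module
lemma half_u2u3 : (2:ℝ)⁻¹ • (u2 + u3) = mp u2 u3 := by simp [mp]
lemma half_u3u1 : (2:ℝ)⁻¹ • (u3 + u1) = mp u1 u3 := by simp [mp]; module
lemma half_u3u2 : (2:ℝ)⁻¹ • (u3 + u2) = mp u2 u3 := by simp [mp]; module
lemma half_u3u3 : (2:ℝ)⁻¹ • (u3 + u3) = u3 := by module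

lemma Ed_zero_tri : Ed 0 = tri u1 u2 u3 := rfl

lemma Ed_succ_pat : ∀ n, Ed (n + 1) = ⋃ T ∈ Cells n, pat T.1 T.2.1 T.2.2 := by
  intro n
  induction n with
  | zero =>
      show (fun q : Pt × Pt => ((2:ℝ)⁻¹ • q.1, (2:ℝ)⁻¹ • q.2)) ''
        (Ed 0 ∪ _ '' Ed 0 ∪ _ '' Ed 0) = _
      rw [Ed_zero_tri, tri_add u2, tri_add u3, Set.image_union, Set.image_union,
        tri_smul, tri_smul, tri_smul, half_u1, half_u2, half_u3, half_u2u1, half_u2u2,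
        half_u2u3, half_u3u1, half_u3u2, half_u3u3]
      rw [show Cells 0 = {((u1 : Pt), (u2 : Pt), (u3 : Pt))} from rfl]
      simp only [Set.mem_singleton_iff, Set.iUnion_iUnion_eq_left]
      exact (pat_eq_tris u1 u2 u3).symm
  | succ n ih =>
      show (fun q : Pt × Pt => ((2:ℝ)⁻¹ • q.1, (2:ℝ)⁻¹ • q.2)) ''
        (Ed (n+1) ∪ _ '' Ed (n+1) ∪ _ '' Ed (n+1)) = _
      rw [ih]
      rw [show ((fun q : Pt × Pt => (u2 + q.1, u2 + q.2)) '' ⋃ T ∈ Cells n, pat T.1 T.2.1 T.2.2) =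
          ⋃ T ∈ (fun T : Pt × Pt × Pt => (u2 + T.1, u2 + T.2.1, u2 + T.2.2)) '' Cells n,
            pat T.1 T.2.1 T.2.2 from key _ _ _ (fun a b c => pat_add u2 a b c) _]
      rw [show ((fun q : Pt × Pt => (u3 + q.1, u3 + q.2)) '' ⋃ T ∈ Cells n, pat T.1 T.2.1 T.2.2) =
          ⋃ T ∈ (fun T : Pt × Pt × Pt => (u3 + T.1, u3 + T.2.1, u3 + T.2.2)) '' Cells n,
            pat T.1 T.2.1 T.2.2 from key _ _ _ (fun a b c => pat_add u3 a b c) _]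
      rw [← Set.biUnion_union, ← Set.biUnion_union]
      exact key _ _ _ (fun a b c => pat_smul a b c) _

lemma Ed_eq_tri : ∀ n, Ed n = ⋃ T ∈ Cells n, tri T.1 T.2.1 T.2.2 := by
  intro n
  induction n with
  | zero => simp [Cells]; exact Ed_zero_tri
  | succ n ih =>
      show (fun q : Pt × Pt => ((2:ℝ)⁻¹ • q.1, (2:ℝ)⁻¹ • q.2)) ''
        (Ed n ∪ _ '' Ed n ∪ _ '' Ed n) = _
      rw [ih]
      rw [show ((fun q : Pt × Pt => (u2 + q.1, u2 + q.2)) '' ⋃ T ∈ Cells n, tri T.1 T.2.1 T.2.2) =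
          ⋃ T ∈ (fun T : Pt × Pt × Pt => (u2 + T.1, u2 + T.2.1, u2 + T.2.2)) '' Cells n,
            tri T.1 T.2.1 T.2.2 from key _ _ _ (fun a b c => tri_add u2 a b c) _]
      rw [show ((fun q : Pt × Pt => (u3 + q.1, u3 + q.2)) '' ⋃ T ∈ Cells n, tri T.1 T.2.1 T.2.2) =
          ⋃ T ∈ (fun T : Pt × Pt × Pt => (u3 + T.1, u3 + T.2.1, u3 + T.2.2)) '' Cells n,
            tri T.1 T.2.1 T.2.2 from key _ _ _ (fun a b c => tri_add u3 a b c) _]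
      rw [← Set.biUnion_union, ← Set.biUnion_union]
      exact key _ _ _ (fun a b c => tri_smul a b c) _

lemma V_succ_six : ∀ n, V (n + 1) = ⋃ T ∈ Cells n, six T.1 T.2.1 T.2.2 := by
  intro n
  induction n with
  | zero =>
      show (fun p : Pt => (2:ℝ)⁻¹ • p) '' (V 0 ∪ _ '' V 0 ∪ _ '' V 0) = _
      rw [show V 0 = cor u1 u2 u3 from rfl, cor_add u2, cor_add u3, Set.image_union,
        Set.image_union, cor_smul, cor_smul, cor_smul, half_u1, half_u2, half_u3, half_u2u1,
        half_u2u2, half_u2u3, half_u3u1, half_u3u2, half_u3u3]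
      rw [show Cells 0 = {((u1 : Pt), (u2 : Pt), (u3 : Pt))} from rfl]
      simp only [Set.mem_singleton_iff, Set.iUnion_iUnion_eq_left]
      exact (six_eq_cors u1 u2 u3).symm
  | succ n ih =>
      show (fun p : Pt => (2:ℝ)⁻¹ • p) '' (V (n+1) ∪ _ '' V (n+1) ∪ _ '' V (n+1)) = _
      rw [ih]
      rw [show ((fun p : Pt => u2 + p) '' ⋃ T ∈ Cells n, six T.1 T.2.1 T.2.2) =
          ⋃ T ∈ (fun T : Pt × Pt × Pt => (u2 + T.1, u2 + T.2.1, u2 + T.2.2)) '' Cells n,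
            six T.1 T.2.1 T.2.2 from key _ _ _ (fun a b c => six_add u2 a b c) _]
      rw [show ((fun p : Pt => u3 + p) '' ⋃ T ∈ Cells n, six T.1 T.2.1 T.2.2) =
          ⋃ T ∈ (fun T : Pt × Pt × Pt => (u3 + T.1, u3 + T.2.1, u3 + T.2.2)) '' Cells n,
            six T.1 T.2.1 T.2.2 from key _ _ _ (fun a b c => six_add u3 a b c) _]
      rw [← Set.biUnion_union, ← Set.biUnion_union]
      exact key _ _ _ (fun a b c => six_smul a b c) _

lemma cells_mem_V {n : ℕ} {T : Pt × Pt × Pt} (hT : T ∈ Cells n) :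
    T.1 ∈ V n ∧ T.2.1 ∈ V n ∧ T.2.2 ∈ V n := by
  have h := V_eq_cor n
  refine ⟨?_, ?_, ?_⟩ <;> rw [h] <;>
    exact Set.mem_biUnion hT (by simp [cor])

lemma cells_edges {n : ℕ} {T : Pt × Pt × Pt} (hT : T ∈ Cells n) :
    (T.1, T.2.1) ∈ Ed n ∧ (T.2.1, T.2.2) ∈ Ed n ∧ (T.1, T.2.2) ∈ Ed n := by
  have h := Ed_eq_tri n
  refine ⟨?_, ?_, ?_⟩ <;> rw [h] <;>
    exact Set.mem_biUnion hT (by simp [tri])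

lemma V_subset_succ {n : ℕ} : V n ⊆ V (n + 1) := by
  rw [V_eq_cor n, V_succ_six n]
  refine Set.iUnion₂_mono fun T hT => ?_
  intro p hp
  simp only [cor, Set.mem_insert_iff, Set.mem_singleton_iff] at hp
  simp only [six, Set.mem_insert_iff, Set.mem_singleton_iff]
  tauto

/-! ### the triangular lattice -/

def TLat (n : ℕ) : Set Pt :=
  {p | ∃ i j : ℤ, p.1 = (i + j / 2) / 2 ^ n ∧ p.2 = j * (Real.sqrt 3 / 2) / 2 ^ n}

lemma TLat_add_u2 {n : ℕ} {p : Pt} (hp : p ∈ TLat n) : u2 + p ∈ TLat n := by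
  obtain ⟨i, j, h1, h2⟩ := hp
  have h2n : ((2:ℝ)^n) ≠ 0 := by positivity
  refine ⟨i, j + 2 ^ n, ?_, ?_⟩
  · show 1/2 + p.1 = _
    rw [h1]; push_cast; field_simp; ring_nf
    try exact Or.inl trivial
  · show Real.sqrt 3 / 2 + p.2 = _
    rw [h2]; push_cast; field_simp; ring_nf
    try exact Or.inl trivial

lemma TLat_add_u3 {n : ℕ} {p : Pt} (hp : p ∈ TLat n) : u3 + p ∈ TLat n := by
  obtain ⟨i, j, h1, h2⟩ := hp
  have h2n : ((2:ℝ)^n) ≠ 0 := by positivity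
  refine ⟨i + 2 ^ n, j, ?_, ?_⟩
  · show 1 + p.1 = _
    rw [h1]; push_cast; field_simp; ring_nf
    try exact Or.inl trivial
  · show (0:ℝ) + p.2 = _
    rw [h2]; ring

lemma TLat_half {n : ℕ} {p : Pt} (hp : p ∈ TLat n) : (2:ℝ)⁻¹ • p ∈ TLat (n + 1) := by
  obtain ⟨i, j, h1, h2⟩ := hp
  have h2n : ((2:ℝ)^n) ≠ 0 := by positivity
  refine ⟨i, j, ?_, ?_⟩
  · show 2⁻¹ * p.1 = _
    rw [h1]; push_cast; rw [pow_succ]; ring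
  · show 2⁻¹ * p.2 = _
    rw [h2]; push_cast; rw [pow_succ]; ring

lemma V_subset_TLat : ∀ n, V n ⊆ TLat n := by
  intro n
  induction n with
  | zero =>
      intro p hp
      simp only [V, Set.mem_insert_iff, Set.mem_singleton_iff] at hp
      rcases hp with rfl | rfl | rfl
      · exact ⟨0, 0, by simp [u1], by simp [u1]⟩
      · exact ⟨0, 1, by simp [u2], by simp [u2]⟩
      · exact ⟨1, 0, by simp [u3], by simp [u3]⟩
  | succ n ih =>
      intro p hp
      simp only [V, Set.mem_union, Set.mem_image] at hp
      obtain ⟨q, hq, rfl⟩ := hp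
      rcases hq with (hq | ⟨r, hr, rfl⟩) | ⟨r, hr, rfl⟩
      · exact TLat_half (ih hq)
      · exact TLat_half (TLat_add_u2 (ih hr))
      · exact TLat_half (TLat_add_u3 (ih hr))

lemma sqrt3_sq : Real.sqrt 3 ^ 2 = 3 := Real.sq_sqrt (by norm_num)

lemma TLat_dist_sq {n : ℕ} {p q : Pt} (hp : p ∈ TLat n) (hq : q ∈ TLat n) (hne : p ≠ q) :
    (1:ℝ) / 4 ^ n ≤ (p.1 - q.1) ^ 2 + (p.2 - q.2) ^ 2 := by
  obtain ⟨i, j, h1, h2⟩ := hp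
  obtain ⟨i', j', h1', h2'⟩ := hq
  have h2n : ((2:ℝ)^n) ≠ 0 := by positivity
  have h4 : ((4:ℝ))^n = 2^n * 2^n := by rw [(by norm_num : (4:ℝ) = 2*2), mul_pow]
  have hs : Real.sqrt 3 ^ 2 = 3 := sqrt3_sq
  have hform : (p.1 - q.1) ^ 2 + (p.2 - q.2) ^ 2 =
      (((i - i' : ℤ) : ℝ) ^ 2 + ((i - i' : ℤ) : ℝ) * ((j - j' : ℤ) : ℝ) +
        ((j - j' : ℤ) : ℝ) ^ 2) / 4 ^ n := by
    rw [show p.2 = (j:ℝ) * (Real.sqrt 3 / 2) / 2^n from h2,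
      show q.2 = (j':ℝ) * (Real.sqrt 3 / 2) / 2^n from h2', h1, h1', h4]
    push_cast
    field_simp
    linear_combination (((j:ℝ)-j')^2) * hs
  have hnz : ¬((i - i' : ℤ) = 0 ∧ (j - j' : ℤ) = 0) := by
    rintro ⟨hk0, hl0⟩
    apply hne
    have hi : i = i' := by omega
    have hj : j = j' := by omega
    apply Prod.ext <;> simp [h1, h2, h1', h2', hi, hj]
  set k := i - i' with hk
  set l := j - j' with hl
  have hint : (1 : ℤ) ≤ k ^ 2 + k * l + l ^ 2 := by
    have h40 : 0 < (2*k+l)^2 + 3*l^2 := by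
      rcases eq_or_ne l 0 with hl0 | hl0
      · have hk0 : k ≠ 0 := by tauto
        have h2k : 2*k + l ≠ 0 := by omega
        have := mul_self_pos.mpr h2k
        nlinarith [sq_nonneg l]
      · have := mul_self_pos.mpr hl0
        nlinarith [sq_nonneg (2*k+l)]
    have h4m : 0 < 4 * (k^2 + k*l + l^2) := by nlinarith
    omega
  rw [hform]
  have h1le : (1:ℝ) ≤ ((k:ℝ)^2 + (k:ℝ)*(l:ℝ) + (l:ℝ)^2) := by exact_mod_cast hint
  gcongr

lemma V_dist_sq {n : ℕ} {p q : Pt} (hp : p ∈ V n) (hq : q ∈ V n) (hne : p ≠ q) :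
    (1:ℝ) / 4 ^ n ≤ (p.1 - q.1) ^ 2 + (p.2 - q.2) ^ 2 :=
  TLat_dist_sq (V_subset_TLat n hp) (V_subset_TLat n hq) hne

/-! ### edge vectors -/

lemma half_smul_pow (n : ℕ) (v : Pt) :
    (2:ℝ)⁻¹ • (((2:ℝ) ^ n)⁻¹ • v) = ((2:ℝ) ^ (n + 1))⁻¹ • v := by
  rw [smul_smul, pow_succ, mul_inv, mul_comm]

lemma edge_vec : ∀ n, ∀ {p q : Pt}, (p, q) ∈ Ed n →
    q - p = ((2:ℝ) ^ n)⁻¹ • u2 ∨ q - p = ((2:ℝ) ^ n)⁻¹ • u3 ∨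
      q - p = ((2:ℝ) ^ n)⁻¹ • (u3 - u2) := by
  intro n
  induction n with
  | zero =>
      intro p q hp
      simp only [Ed, Set.mem_insert_iff, Set.mem_singleton_iff, Prod.mk.injEq] at hp
      rcases hp with ⟨rfl, rfl⟩ | ⟨rfl, rfl⟩ | ⟨rfl, rfl⟩
      · left; simp [u1_zero]
      · right; right; simp
      · right; left; simp [u1_zero]
  | succ n ih =>
      intro p q hp
      simp only [Ed, Set.mem_union, Set.mem_image] at hp
      obtain ⟨⟨a, b⟩, hab, heq⟩ := hp
      rw [Prod.mk.injEq] at heq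
      obtain ⟨hpa, hqb⟩ := heq
      subst hpa; subst hqb
      have hdiff : ∀ {c d : Pt}, (c, d) ∈ Ed n →
          (2:ℝ)⁻¹ • d - (2:ℝ)⁻¹ • c = (2:ℝ)⁻¹ • (d - c) := by
        intro c d _; rw [smul_sub]
      rcases hab with (hab | ⟨⟨c, d⟩, hcd, heq⟩) | ⟨⟨c, d⟩, hcd, heq⟩
      · rcases ih hab with h | h | h <;>
          [left; (right; left); (right; right)] <;>
          rw [hdiff hab, h, half_smul_pow]
      · rw [Prod.mk.injEq] at heq
        obtain ⟨h1, h2⟩ := heq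
        have hab : b - a = d - c := by rw [← h1, ← h2]; abel
        have : (2:ℝ)⁻¹ • b - (2:ℝ)⁻¹ • a = (2:ℝ)⁻¹ • (d - c) := by
          rw [← smul_sub, hab]
        rcases ih hcd with h | h | h <;>
          [left; (right; left); (right; right)] <;>
          rw [this, h, half_smul_pow]
      · rw [Prod.mk.injEq] at heq
        obtain ⟨h1, h2⟩ := heq
        have hab : b - a = d - c := by rw [← h1, ← h2]; abel
        have : (2:ℝ)⁻¹ • b - (2:ℝ)⁻¹ • a = (2:ℝ)⁻¹ • (d - c) := by
          rw [← smul_sub, hab]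
        rcases ih hcd with h | h | h <;>
          [left; (right; left); (right; right)] <;>
          rw [this, h, half_smul_pow]

lemma sqrt3_pos : 0 < Real.sqrt 3 := Real.sqrt_pos.mpr (by norm_num)

lemma u2_ne_zero : u2 ≠ 0 := by
  intro h
  have := congrArg Prod.fst h
  norm_num [u2] at this

lemma u3_ne_zero : u3 ≠ 0 := by
  intro h
  have := congrArg Prod.fst h
  norm_num [u3] at this

lemma u3u2_ne_zero : u3 - u2 ≠ 0 := by
  intro h
  have := congrArg Prod.fst h
  norm_num [u3, u2, Prod.fst_sub] at this

lemma ed_ne {n : ℕ} {p q : Pt} (h : (p, q) ∈ Ed n) : p ≠ q := by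
  have hc : ((2:ℝ) ^ n)⁻¹ ≠ 0 := by positivity
  intro hpq
  subst hpq
  rcases edge_vec n h with h' | h' | h' <;> simp only [sub_self] at h'
  · exact u2_ne_zero (by simpa [smul_eq_zero, hc] using h'.symm)
  · exact u3_ne_zero (by simpa [smul_eq_zero, hc] using h'.symm)
  · exact u3u2_ne_zero (by simpa [smul_eq_zero, hc] using h'.symm)

lemma ed_mem_V {n : ℕ} {p q : Pt} (h : (p, q) ∈ Ed n) : p ∈ V n ∧ q ∈ V n := by
  rw [Ed_eq_tri n] at h
  rw [V_eq_cor n]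
  obtain ⟨T, hT, hpq⟩ := Set.mem_iUnion₂.mp h
  simp only [tri, Set.mem_insert_iff, Set.mem_singleton_iff, Prod.mk.injEq] at hpq
  rcases hpq with ⟨rfl, rfl⟩ | ⟨rfl, rfl⟩ | ⟨rfl, rfl⟩ <;>
    exact ⟨Set.mem_biUnion hT (by simp [cor]), Set.mem_biUnion hT (by simp [cor])⟩

lemma adj_of_ed {n : ℕ} {p q : Pt} (h : (p, q) ∈ Ed n) : (SG n).Adj p q :=
  ⟨Or.inl h, ed_ne h⟩

lemma base_vec_normsq :
    u2.1 ^ 2 + u2.2 ^ 2 = 1 ∧ u3.1 ^ 2 + u3.2 ^ 2 = 1 ∧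
      (u3 - u2).1 ^ 2 + (u3 - u2).2 ^ 2 = 1 := by
  refine ⟨?_, ?_, ?_⟩ <;>
    simp only [u2, u3, Prod.fst_sub, Prod.snd_sub] <;>
    nlinarith [sqrt3_sq]

lemma edge_len {n : ℕ} {p q : Pt} (h : (p, q) ∈ Ed n) :
    (p.1 - q.1) ^ 2 + (p.2 - q.2) ^ 2 = 1 / 4 ^ n := by
  have h4 : ((4:ℝ))^n = 2^n * 2^n := by rw [(by norm_num : (4:ℝ) = 2*2), mul_pow]
  have h2n : ((2:ℝ)^n) ≠ 0 := by positivity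
  obtain ⟨e1, e2, e3⟩ := base_vec_normsq
  rcases edge_vec n h with h' | h' | h' <;>
  · have h1 : q.1 - p.1 = ((2:ℝ)^n)⁻¹ * _ := congrArg Prod.fst h'
    have h2 : q.2 - p.2 = ((2:ℝ)^n)⁻¹ * _ := congrArg Prod.snd h'
    rw [show (p.1 - q.1)^2 = (q.1 - p.1)^2 by ring, show (p.2 - q.2)^2 = (q.2 - p.2)^2 by ring,
      h1, h2, h4]
    simp only [Prod.fst_sub, Prod.snd_sub] at e3 ⊢
    field_simp
    nlinarith [e1, e2, e3]

/-! ### midpoint facts -/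

lemma mp_comm (a b : Pt) : mp a b = mp b a := by simp [mp, add_comm]

lemma two_smul_mp (a b : Pt) : (2:ℝ) • mp a b = a + b := by
  simp [mp, smul_smul]

lemma mp_ne_left {a b : Pt} (h : a ≠ b) : mp a b ≠ a := by
  intro he
  apply h
  have h2 := congrArg (fun z : Pt => (2:ℝ) • z) he
  simp only [two_smul_mp] at h2
  have : a + b = a + a := by rw [h2, two_smul]
  exact (add_left_cancel this).symm

lemma mp_inj_right {a b c : Pt} (h : mp a b = mp a c) : b = c := by
  have h2 := congrArg (fun z : Pt => (2:ℝ) • z) h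
  simp only [two_smul_mp] at h2
  exact add_left_cancel h2

/-- the six possible edge directions -/
def dir6 (v : Pt) : Prop :=
  v = u2 ∨ v = u3 ∨ v = u3 - u2 ∨ v = -u2 ∨ v = -u3 ∨ v = -(u3 - u2)

lemma adj_vec {n : ℕ} {a b : Pt} (h : (SG n).Adj a b) :
    ∃ v, dir6 v ∧ b - a = ((2:ℝ) ^ n)⁻¹ • v := by
  rcases h.1 with h' | h'
  · rcases edge_vec n h' with hv | hv | hv
    exacts [⟨u2, Or.inl rfl, hv⟩, ⟨u3, Or.inr (Or.inl rfl), hv⟩,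
      ⟨u3 - u2, Or.inr (Or.inr (Or.inl rfl)), hv⟩]
  · rcases edge_vec n h' with hv | hv | hv
    · exact ⟨-u2, by unfold dir6; tauto, by rw [smul_neg, ← hv]; abel⟩
    · exact ⟨-u3, by unfold dir6; tauto, by rw [smul_neg, ← hv]; abel⟩
    · exact ⟨-(u3 - u2), by unfold dir6; tauto, by rw [smul_neg, ← hv]; abel⟩

lemma six_vec_cases {v w : Pt} (hv : dir6 v) (hw : dir6 w) :
    v = w ∨ v = -w ∨ ((v.1 - w.1) ^ 2 + (v.2 - w.2) ^ 2 ≤ 3 ∧ v ≠ w) := by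
  have s3 := sqrt3_pos
  have s3q := sqrt3_sq
  rcases hv with rfl | rfl | rfl | rfl | rfl | rfl <;>
    rcases hw with rfl | rfl | rfl | rfl | rfl | rfl <;>
    first
      | exact Or.inl rfl
      | (left; module)
      | (right; left; module)
      | (right; right;
         constructor
         · simp only [u2, u3, Prod.fst_sub, Prod.snd_sub, Prod.fst_neg, Prod.snd_neg]
           nlinarith
         · intro hEq
           have h1 := congrArg Prod.fst hEq
           have h2 := congrArg Prod.snd hEq
           simp only [u2, u3, Prod.fst_sub, Prod.snd_sub, Prod.fst_neg, Prod.snd_neg] at h1 h2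
           linarith)

lemma mid_unique {n : ℕ} {a b a' b' : Pt} (ha : (SG n).Adj a b) (ha' : (SG n).Adj a' b')
    (haV : a ∈ V n) (haV' : a' ∈ V n)
    (hm : mp a b = mp a' b') : (a' = a ∧ b' = b) ∨ (a' = b ∧ b' = a) := by
  obtain ⟨v, hv6, hv⟩ := adj_vec ha
  obtain ⟨w, hw6, hw⟩ := adj_vec ha'
  set c : ℝ := ((2:ℝ) ^ n)⁻¹ with hc
  have hcpos : 0 < c := by rw [hc]; positivity
  have hsum : a + b = a' + b' := by
    have := congrArg (fun z : Pt => (2:ℝ) • z) hm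
    simpa only [two_smul_mp] using this
  have hv1 : b.1 - a.1 = c * v.1 := congrArg Prod.fst hv
  have hv2 : b.2 - a.2 = c * v.2 := congrArg Prod.snd hv
  have hw1 : b'.1 - a'.1 = c * w.1 := congrArg Prod.fst hw
  have hw2 : b'.2 - a'.2 = c * w.2 := congrArg Prod.snd hw
  have hs1 : a.1 + b.1 = a'.1 + b'.1 := congrArg Prod.fst hsum
  have hs2 : a.2 + b.2 = a'.2 + b'.2 := congrArg Prod.snd hsum
  have hd1 : a'.1 - a.1 = (c / 2) * (v.1 - w.1) := by linarith
  have hd2 : a'.2 - a.2 = (c / 2) * (v.2 - w.2) := by linarith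
  rcases six_vec_cases hv6 hw6 with hvw | hvw | ⟨hbound, hne⟩
  · left
    have e1 : w.1 = v.1 := by rw [hvw]
    have e2 : w.2 = v.2 := by rw [hvw]
    rw [e1] at hd1
    rw [e2] at hd2
    ring_nf at hd1 hd2
    constructor
    · exact Prod.ext (by linarith) (by linarith)
    · exact Prod.ext (by linarith) (by linarith)
  · right
    have e1 : w.1 = -v.1 := by rw [hvw]; simp
    have e2 : w.2 = -v.2 := by rw [hvw]; simp
    rw [e1] at hd1
    rw [e2] at hd2
    ring_nf at hd1 hd2 hv1 hv2
    constructor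
    · exact Prod.ext (by linarith) (by linarith)
    · exact Prod.ext (by linarith) (by linarith)
  · exfalso
    have hane : a ≠ a' := by
      intro hEq
      apply hne
      have hc2 : (0:ℝ) < c / 2 := by linarith
      have e1 : v.1 = w.1 := by
        have h0 : (c / 2) * (v.1 - w.1) = 0 := by rw [← hd1, hEq]; ring
        rcases mul_eq_zero.mp h0 with h | h
        · linarith
        · linarith
      have e2 : v.2 = w.2 := by
        have h0 : (c / 2) * (v.2 - w.2) = 0 := by rw [← hd2, hEq]; ring
        rcases mul_eq_zero.mp h0 with h | h
        · linarith
        · linarith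
      exact Prod.ext e1 e2
    have hVd := V_dist_sq haV haV' hane
    have hcsq : c ^ 2 = 1 / 4 ^ n := by
      rw [hc, (by norm_num : (4:ℝ) = 2*2), mul_pow]
      have h2n : ((2:ℝ)^n) ≠ 0 := by positivity
      field_simp
    have hexp : (a.1 - a'.1) ^ 2 + (a.2 - a'.2) ^ 2 =
        (c / 2) ^ 2 * ((v.1 - w.1) ^ 2 + (v.2 - w.2) ^ 2) := by
      have e1 : a.1 - a'.1 = -((c/2) * (v.1 - w.1)) := by linarith
      have e2 : a.2 - a'.2 = -((c/2) * (v.2 - w.2)) := by linarith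
      rw [e1, e2]; ring
    rw [hexp] at hVd
    nlinarith [hbound, hcsq, hcpos, sq_nonneg c]

/-! ### unordered cells -/

def IsCell (n : ℕ) (a b c : Pt) : Prop :=
  (a, b, c) ∈ Cells n ∨ (a, c, b) ∈ Cells n ∨ (b, a, c) ∈ Cells n ∨
    (b, c, a) ∈ Cells n ∨ (c, a, b) ∈ Cells n ∨ (c, b, a) ∈ Cells n

lemma isCell_perm {n : ℕ} {a b c : Pt} (h : IsCell n a b c) :
    IsCell n a c b ∧ IsCell n b a c ∧ IsCell n b c a ∧ IsCell n c a b ∧ IsCell n c b a := by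
  unfold IsCell at *
  tauto

lemma isCell_mem_V {n : ℕ} {a b c : Pt} (h : IsCell n a b c) :
    a ∈ V n ∧ b ∈ V n ∧ c ∈ V n := by
  rcases h with h | h | h | h | h | h <;>
    have := cells_mem_V h <;> simp_all <;> tauto

lemma isCell_adj {n : ℕ} {a b c : Pt} (h : IsCell n a b c) :
    (SG n).Adj a b ∧ (SG n).Adj b c ∧ (SG n).Adj a c := by
  rcases h with h | h | h | h | h | h <;>
    obtain ⟨e1, e2, e3⟩ := cells_edges h <;>
    simp only at e1 e2 e3 <;>
    exact ⟨by first | exact adj_of_ed ‹_› | exact (adj_of_ed ‹_›).symm,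
           by first | exact adj_of_ed ‹_› | exact (adj_of_ed ‹_›).symm,
           by first | exact adj_of_ed ‹_› | exact (adj_of_ed ‹_›).symm⟩

/-! ### edge splitting, connectivity -/

lemma adj_mid {n : ℕ} {p q : Pt} (h : (SG n).Adj p q) :
    (SG (n+1)).Adj p (mp p q) ∧ (SG (n+1)).Adj (mp p q) q := by
  have hne := h.ne
  have hm1 : mp p q ≠ p := mp_ne_left hne
  have hm2 : mp p q ≠ q := by rw [mp_comm]; exact mp_ne_left (Ne.symm hne)
  have key : ∀ {p' q' : Pt}, (p', q') ∈ Ed n →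
      (p', mp p' q') ∈ Ed (n+1) ∧ (mp p' q', q') ∈ Ed (n+1) := by
    intro p' q' hEd
    rw [Ed_eq_tri n] at hEd
    obtain ⟨T, hT, hpq⟩ := Set.mem_iUnion₂.mp hEd
    rw [Ed_succ_pat n]
    simp only [tri, Set.mem_insert_iff, Set.mem_singleton_iff, Prod.mk.injEq] at hpq
    rcases hpq with ⟨rfl, rfl⟩ | ⟨rfl, rfl⟩ | ⟨rfl, rfl⟩ <;>
      exact ⟨Set.mem_biUnion hT (by simp [pat]), Set.mem_biUnion hT (by simp [pat])⟩
  rcases h.1 with hEd | hEd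
  · obtain ⟨e1, e2⟩ := key hEd
    exact ⟨⟨Or.inl e1, Ne.symm hm1⟩, ⟨Or.inl e2, hm2⟩⟩
  · obtain ⟨e1, e2⟩ := key hEd
    rw [mp_comm q p] at e1 e2
    exact ⟨⟨Or.inr e2, Ne.symm hm1⟩, ⟨Or.inr e1, hm2⟩⟩

lemma double_walk {n : ℕ} {p q : Pt} (w : (SG n).Walk p q) :
    ∃ w' : (SG (n+1)).Walk p q, w'.length = 2 * w.length := by
  induction w with
  | nil => exact ⟨SimpleGraph.Walk.nil, rfl⟩
  | cons h w ih =>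
      obtain ⟨w', hw'⟩ := ih
      obtain ⟨h1, h2⟩ := adj_mid h
      refine ⟨SimpleGraph.Walk.cons h1 (SimpleGraph.Walk.cons h2 w'), ?_⟩
      simp [SimpleGraph.Walk.length_cons, hw']
      omega

lemma reach_lift {n : ℕ} {p q : Pt} (h : (SG n).Reachable p q) :
    (SG (n+1)).Reachable p q := by
  obtain ⟨w⟩ := h
  obtain ⟨w', _⟩ := double_walk w
  exact ⟨w'⟩

lemma u1_ne_u2 : u1 ≠ u2 := by
  intro h; have := congrArg Prod.fst h; norm_num [u1, u2] at this
lemma u2_ne_u3 : u2 ≠ u3 := by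
  intro h; have := congrArg Prod.fst h; norm_num [u2, u3] at this
lemma u1_ne_u3 : u1 ≠ u3 := by
  intro h; have := congrArg Prod.fst h; norm_num [u1, u3] at this

lemma V_connected : ∀ n, ∀ p ∈ V n, ∀ q ∈ V n, (SG n).Reachable p q := by
  intro n
  induction n with
  | zero =>
      have a12 : (SG 0).Adj u1 u2 := ⟨Or.inl (by simp [Ed]), u1_ne_u2⟩
      have a23 : (SG 0).Adj u2 u3 := ⟨Or.inl (by simp [Ed]), u2_ne_u3⟩
      have a13 : (SG 0).Adj u1 u3 := ⟨Or.inl (by simp [Ed]), u1_ne_u3⟩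
      intro p hp q hq
      simp only [V, Set.mem_insert_iff, Set.mem_singleton_iff] at hp hq
      rcases hp with rfl | rfl | rfl <;> rcases hq with rfl | rfl | rfl
      · rfl
      · exact a12.reachable
      · exact a13.reachable
      · exact a12.symm.reachable
      · rfl
      · exact a23.reachable
      · exact a13.symm.reachable
      · exact a23.symm.reachable
      · rfl
  | succ n ih =>
      have six_reach : ∀ T ∈ Cells n, ∀ p ∈ six T.1 T.2.1 T.2.2,
          (SG (n+1)).Reachable p T.1 := by
        intro T hT p hp
        obtain ⟨hab, hbc, hac⟩ := isCell_adj (Or.inl hT : IsCell n T.1 T.2.1 T.2.2)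
        simp only [six, Set.mem_insert_iff, Set.mem_singleton_iff] at hp
        have r1 : (SG (n+1)).Reachable (mp T.1 T.2.1) T.1 := (adj_mid hab).1.symm.reachable
        have r2 : (SG (n+1)).Reachable (mp T.1 T.2.2) T.1 := (adj_mid hac).1.symm.reachable
        have rb : (SG (n+1)).Reachable T.2.1 T.1 :=
          ((adj_mid hab).2.symm.reachable).trans r1
        have rc : (SG (n+1)).Reachable T.2.2 T.1 :=
          ((adj_mid hac).2.symm.reachable).trans r2
        have r3 : (SG (n+1)).Reachable (mp T.2.1 T.2.2) T.1 :=
          ((adj_mid hbc).1.symm.reachable).trans rb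
        rcases hp with rfl | rfl | rfl | rfl | rfl | rfl
        · rfl
        · exact rb
        · exact rc
        · exact r1
        · exact r2
        · exact r3
      intro p hp q hq
      rw [V_succ_six n] at hp hq
      obtain ⟨T, hT, hpT⟩ := Set.mem_iUnion₂.mp hp
      obtain ⟨T', hT', hqT⟩ := Set.mem_iUnion₂.mp hq
      have h1 := six_reach T hT p hpT
      have h2 := six_reach T' hT' q hqT
      have hTV := (cells_mem_V hT).1
      have hTV' := (cells_mem_V hT').1
      exact (h1.trans (reach_lift (ih T.1 hTV T'.1 hTV'))).trans h2.symm

/-! ### distance helpers -/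

lemma dist_adj_le {n : ℕ} {x a b : Pt} (hx : x ∈ V n) (ha : a ∈ V n)
    (h : (SG n).Adj a b) : gdist n x b ≤ gdist n x a + 1 := by
  obtain ⟨w, hw⟩ := (V_connected n x hx a ha).exists_walk_length_eq_dist
  have := SimpleGraph.dist_le (w.concat h)
  rw [SimpleGraph.Walk.length_concat, hw] at this
  exact this

lemma mid_not_in_V {n : ℕ} {a b : Pt} (h : (SG n).Adj a b) (ha : a ∈ V n) :
    mp a b ∉ V n := by
  intro hm
  have hne : mp a b ≠ a := mp_ne_left h.ne
  have hd := V_dist_sq hm ha hne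
  have hlen : (a.1 - b.1) ^ 2 + (a.2 - b.2) ^ 2 = 1 / 4 ^ n := by
    rcases h.1 with hEd | hEd
    · exact edge_len hEd
    · have := edge_len hEd
      rw [show (b.1 - a.1)^2 = (a.1 - b.1)^2 by ring,
        show (b.2 - a.2)^2 = (a.2 - b.2)^2 by ring] at this
      exact this
  have hm1 : (mp a b).1 = 2⁻¹ * (a.1 + b.1) := rfl
  have hm2 : (mp a b).2 = 2⁻¹ * (a.2 + b.2) := rfl
  rw [hm1, hm2] at hd
  have h4pos : (0:ℝ) < 1 / 4 ^ n := by positivity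
  nlinarith [hd, hlen]

/-! ### the potential function -/

def hfn (n : ℕ) (x : Pt) (p : Pt) : ℕ :=
  if p ∈ V n then 2 * gdist n x p
  else sInf {m | ∃ a b c : Pt, IsCell n a b c ∧ p = mp a b ∧
    m = min (2 * gdist n x a + 1) (min (2 * gdist n x b + 1) (2 * gdist n x c + 2))}

lemma hfn_corner {n : ℕ} (x : Pt) {p : Pt} (hp : p ∈ V n) :
    hfn n x p = 2 * gdist n x p := if_pos hp

lemma hfn_mid_le {n : ℕ} (x : Pt) {a b c : Pt} (hcell : IsCell n a b c) :
    hfn n x (mp a b) ≤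
      min (2 * gdist n x a + 1) (min (2 * gdist n x b + 1) (2 * gdist n x c + 2)) := by
  have hadj := (isCell_adj hcell).1
  have haV := (isCell_mem_V hcell).1
  rw [hfn, if_neg (mid_not_in_V hadj haV)]
  exact Nat.sInf_le ⟨a, b, c, hcell, rfl, rfl⟩

lemma hfn_mid_eq {n : ℕ} (x : Pt) {a b c : Pt} (hcell : IsCell n a b c) :
    ∃ c', IsCell n a b c' ∧ hfn n x (mp a b) =
      min (2 * gdist n x a + 1) (min (2 * gdist n x b + 1) (2 * gdist n x c' + 2)) := by
  have hadj := (isCell_adj hcell).1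
  have haV := (isCell_mem_V hcell).1
  have hnonempty : {m | ∃ a' b' c' : Pt, IsCell n a' b' c' ∧ mp a b = mp a' b' ∧
      m = min (2 * gdist n x a' + 1) (min (2 * gdist n x b' + 1) (2 * gdist n x c' + 2))}.Nonempty :=
    ⟨_, a, b, c, hcell, rfl, rfl⟩
  have hmem := Nat.sInf_mem hnonempty
  obtain ⟨a', b', c', hcell', hmp, hval⟩ := hmem
  have hadj' := (isCell_adj hcell').1
  have haV' := (isCell_mem_V hcell').1
  have huniq := mid_unique hadj hadj' haV haV' hmp
  have heq : hfn n x (mp a b) = sInf {m | ∃ a' b' c' : Pt, IsCell n a' b' c' ∧ mp a b = mp a' b' ∧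
      m = min (2 * gdist n x a' + 1) (min (2 * gdist n x b' + 1) (2 * gdist n x c' + 2))} := by
    rw [hfn, if_neg (mid_not_in_V hadj haV)]
  rcases huniq with ⟨rfl, rfl⟩ | ⟨rfl, rfl⟩
  · exact ⟨c', hcell', by rw [heq, hval]⟩
  · refine ⟨c', ((isCell_perm hcell').2.1), by rw [heq, hval, min_left_comm]⟩

lemma hfn_corner_lip {n : ℕ} {x : Pt} (hx : x ∈ V n) {a b c : Pt} (hcell : IsCell n a b c) :
    hfn n x a ≤ hfn n x (mp a b) + 1 ∧ hfn n x (mp a b) ≤ hfn n x a + 1 := by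
  have hmemV := isCell_mem_V hcell
  have hadj := isCell_adj hcell
  have hab : gdist n x a ≤ gdist n x b + 1 := dist_adj_le hx hmemV.2.1 hadj.1.symm
  have hle := hfn_mid_le x hcell
  obtain ⟨c', hcell', hval⟩ := hfn_mid_eq x hcell
  have hac' : gdist n x a ≤ gdist n x c' + 1 :=
    dist_adj_le hx (isCell_mem_V hcell').2.2 (isCell_adj hcell').2.2.symm
  rw [hfn_corner x hmemV.1]
  constructor
  · rw [hval]
    rcases min_cases (2 * gdist n x a + 1) (min (2 * gdist n x b + 1) (2 * gdist n x c' + 2)) with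
      ⟨e, _⟩ | ⟨e, _⟩ <;> rw [e]
    · omega
    · rcases min_cases (2 * gdist n x b + 1) (2 * gdist n x c' + 2) with ⟨e2, _⟩ | ⟨e2, _⟩ <;>
        rw [e2] <;> omega
  · calc hfn n x (mp a b) ≤ _ := hle
      _ ≤ 2 * gdist n x a + 1 := min_le_left _ _

lemma hfn_mid_lip {n : ℕ} {x : Pt} (hx : x ∈ V n) {a b c : Pt} (hcell : IsCell n a b c) :
    hfn n x (mp a b) ≤ hfn n x (mp a c) + 1 := by
  have hperm := isCell_perm hcell
  -- cell (a, c, b)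
  have hcell2 : IsCell n a c b := hperm.1
  obtain ⟨c'', hcell'', hval⟩ := hfn_mid_eq x hcell2
  -- hval : hfn (mp a c) = min (2 d a + 1) (min (2 d c + 1) (2 d c'' + 2))
  have hle := hfn_mid_le x hcell
  have hleA : hfn n x (mp a b) ≤ 2 * gdist n x a + 1 := le_trans hle (min_le_left _ _)
  have hleC : hfn n x (mp a b) ≤ 2 * gdist n x c + 2 :=
    le_trans hle (le_trans (min_le_right _ _) (min_le_right _ _))
  have hac'' : gdist n x a ≤ gdist n x c'' + 1 :=
    dist_adj_le hx (isCell_mem_V hcell'').2.2 (isCell_adj hcell'').2.2.symm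
  rw [hval]
  rcases min_cases (2 * gdist n x a + 1) (min (2 * gdist n x c + 1) (2 * gdist n x c'' + 2)) with
    ⟨e, _⟩ | ⟨e, _⟩ <;> rw [e]
  · omega
  · rcases min_cases (2 * gdist n x c + 1) (2 * gdist n x c'' + 2) with ⟨e2, _⟩ | ⟨e2, _⟩ <;>
      rw [e2] <;> omega

lemma edge_lip {n : ℕ} {x : Pt} (hx : x ∈ V n) {p q : Pt} (h : (p, q) ∈ Ed (n + 1)) :
    hfn n x q ≤ hfn n x p + 1 ∧ hfn n x p ≤ hfn n x q + 1 := by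
  rw [Ed_succ_pat n] at h
  obtain ⟨T, hT, hpq⟩ := Set.mem_iUnion₂.mp h
  obtain ⟨a, b, c⟩ := T
  simp only at hpq
  have hcell : IsCell n a b c := Or.inl hT
  have hperm := isCell_perm hcell
  have hacb := hperm.1
  have hbac := hperm.2.1
  have hbca := hperm.2.2.1
  have hcab := hperm.2.2.2.1
  have hcba := hperm.2.2.2.2
  simp only [pat, Set.mem_insert_iff, Set.mem_singleton_iff, Prod.mk.injEq] at hpq
  rcases hpq with ⟨hp, hq⟩ | ⟨hp, hq⟩ | ⟨hp, hq⟩ | ⟨hp, hq⟩ | ⟨hp, hq⟩ |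
    ⟨hp, hq⟩ | ⟨hp, hq⟩ | ⟨hp, hq⟩ | ⟨hp, hq⟩ <;> rw [hp, hq]
  · -- (a, mp a b)
    obtain ⟨h1, h2⟩ := hfn_corner_lip hx hcell
    exact ⟨h2, h1⟩
  · -- (mp a b, mp a c)
    exact ⟨hfn_mid_lip hx hacb, hfn_mid_lip hx hcell⟩
  · -- (a, mp a c)
    obtain ⟨h1, h2⟩ := hfn_corner_lip hx hacb
    exact ⟨h2, h1⟩
  · -- (mp a b, b)
    obtain ⟨h1, h2⟩ := hfn_corner_lip hx hbac
    rw [mp_comm b a] at h1 h2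
    exact ⟨h1, h2⟩
  · -- (b, mp b c)
    obtain ⟨h1, h2⟩ := hfn_corner_lip hx hbca
    exact ⟨h2, h1⟩
  · -- (mp a b, mp b c)
    have e1 := hfn_mid_lip hx hbca
    have e2 := hfn_mid_lip hx hbac
    rw [mp_comm b a] at e1 e2
    exact ⟨e1, e2⟩
  · -- (mp a c, mp b c)
    have e1 := hfn_mid_lip hx hcba
    have e2 := hfn_mid_lip hx hcab
    rw [mp_comm c b] at e1 e2
    rw [mp_comm c a] at e1 e2
    exact ⟨e1, e2⟩
  · -- (mp b c, c)
    obtain ⟨h1, h2⟩ := hfn_corner_lip hx hcba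
    rw [mp_comm c b] at h1 h2
    exact ⟨h1, h2⟩
  · -- (mp a c, c)
    obtain ⟨h1, h2⟩ := hfn_corner_lip hx hcab
    rw [mp_comm c a] at h1 h2
    exact ⟨h1, h2⟩

lemma adj_lip {n : ℕ} {x : Pt} (hx : x ∈ V n) {p q : Pt} (h : (SG (n+1)).Adj p q) :
    hfn n x q ≤ hfn n x p + 1 := by
  rcases h.1 with hEd | hEd
  · exact (edge_lip hx hEd).1
  · exact (edge_lip hx hEd).2

lemma walk_lip {n : ℕ} {x : Pt} (hx : x ∈ V n) {p q : Pt} (w : (SG (n+1)).Walk p q) :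
    hfn n x q ≤ hfn n x p + w.length := by
  induction w with
  | nil => simp
  | cons h w ih =>
      have h2 := adj_lip hx h
      rw [SimpleGraph.Walk.length_cons]
      omega


/-- For every `n` and all `x, y ∈ V_{SG_n}`, the graph distances satisfy
`d_{SG_{n+1}}(x,y) = 2·d_{SG_n}(x,y)`. -/
theorem gdist_doubling (n : ℕ) :
    ∀ x ∈ V n, ∀ y ∈ V n, gdist (n + 1) x y = 2 * gdist n x y := by
  intro x hx y hy
  obtain ⟨w, hw⟩ := (V_connected n x hx y hy).exists_walk_length_eq_dist
  obtain ⟨w2, hl⟩ := double_walk w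
  have hupper : gdist (n+1) x y ≤ 2 * gdist n x y := by
    have := SimpleGraph.dist_le w2
    rw [hl, hw] at this
    exact this
  have hlower : 2 * gdist n x y ≤ gdist (n+1) x y := by
    obtain ⟨w', hw'⟩ :=
      (reach_lift (V_connected n x hx y hy)).exists_walk_length_eq_dist
    have := walk_lip hx w'
    rw [hw'] at this
    rw [hfn_corner x hy, hfn_corner x hx] at this
    have hself : gdist n x x = 0 := SimpleGraph.dist_self
    rw [hself] at this
    simpa [gdist] using this
  omega
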